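/- Let p ≥ 1 and L ≥ 2. For each ℓ = 2,…,L let W_ℓ be an invertible real p×p matrix whose condition number satisfies ‖W_ℓ‖₂‖W_ℓ⁻¹‖₂ ≤ κ, and let g_ℓ : ℝ → ℝ be differentiable with l ≤ g_ℓ′(x) ≤ u for all x ∈ ℝ, where 0 < l ≤ u. Let f = f_{W_L,g_L} ∘ ⋯ ∘ f_{W_2,g_2} be the composition of the associated layer maps. Then f is a bijection of ℝ^p, and there exist constants K, M > 0 such that f is K-Lipschitz with respect to the Euclidean norm, the inverse f⁻¹ is M-Lipschitz with respect to the Euclidean norm, and K·M ≤ (κ·u/l)^{L−1}. -/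

import Mathlib

open scoped Matrix NNReal

/-- The spectral norm `‖W‖₂` of a real `p × p` matrix `W`: the operator norm of the
linear map `x ↦ W x` on the Euclidean space `ℝ^p`. -/
noncomputable def specNorm {p : ℕ} (W : Matrix (Fin p) (Fin p) ℝ) : ℝ :=
  ‖LinearMap.toContinuousLinearMap (Matrix.toEuclideanLin (𝕜 := ℝ) W)‖

/-- The layer map `f_{W,g} : ℝ^p → ℝ^p` sending `x` to the vector whose `j`-th
coordinate is `g((Wᵀ x)_j)`. -/
noncomputable def layerMap {p : ℕ} (W : Matrix (Fin p) (Fin p) ℝ) (g : ℝ → ℝ) :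
    EuclideanSpace ℝ (Fin p) → EuclideanSpace ℝ (Fin p) :=
  fun x => WithLp.toLp 2 (fun j => g (Wᵀ.mulVec x j))

/-- The network `f = f_{W_L,g_L} ∘ ⋯ ∘ f_{W_2,g_2}`, where the index `i : Fin (L-1)`
corresponds to the layer `ℓ = i + 2` (so the layer with index `0` is applied first). -/
noncomputable def netF {p L : ℕ} (W : Fin (L - 1) → Matrix (Fin p) (Fin p) ℝ)
    (g : Fin (L - 1) → ℝ → ℝ) : EuclideanSpace ℝ (Fin p) → EuclideanSpace ℝ (Fin p) :=
  fun x => Fin.foldl (L - 1) (fun y i => layerMap (W i) (g i) y) x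

section SN
open scoped Matrix.Norms.L2Operator

lemma specNorm_eq {p : ℕ} (W : Matrix (Fin p) (Fin p) ℝ) : specNorm W = ‖W‖ := rfl

lemma specNorm_transpose {p : ℕ} (W : Matrix (Fin p) (Fin p) ℝ) :
    specNorm Wᵀ = specNorm W := by
  have h : Wᵀ = Wᴴ := by
    ext i j; simp [Matrix.conjTranspose_apply]
  rw [specNorm_eq, specNorm_eq, h, Matrix.l2_opNorm_conjTranspose]

lemma specNorm_nonneg {p : ℕ} (W : Matrix (Fin p) (Fin p) ℝ) : 0 ≤ specNorm W :=
  norm_nonneg _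

lemma specNorm_pos {p : ℕ} (hp : 1 ≤ p) {W : Matrix (Fin p) (Fin p) ℝ}
    (hW : IsUnit W) : 0 < specNorm W := by
  rw [specNorm_eq]
  rw [norm_pos_iff]
  rintro rfl
  have h := isUnit_zero_iff.mp hW
  have h2 := congrFun (congrFun h ⟨0, hp⟩) ⟨0, hp⟩
  simp [Matrix.one_apply] at h2
end SN

lemma mulVec_lipschitz {p : ℕ} (M : Matrix (Fin p) (Fin p) ℝ) :
    LipschitzWith (specNorm M).toNNReal
      ⇑(LinearMap.toContinuousLinearMap (Matrix.toEuclideanLin (𝕜 := ℝ) M)) := by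
  have : (specNorm M).toNNReal = ‖LinearMap.toContinuousLinearMap (Matrix.toEuclideanLin (𝕜 := ℝ) M)‖₊ := norm_toNNReal
  rw [this]
  exact (LinearMap.toContinuousLinearMap (Matrix.toEuclideanLin (𝕜 := ℝ) M)).lipschitz

lemma g_key {g : ℝ → ℝ} {l : ℝ} (hl : 0 < l) (hg : Differentiable ℝ g)
    (hd : ∀ x, l ≤ deriv g x) :
    ∀ a b : ℝ, a ≤ b → l * (b - a) ≤ g b - g a := by
  intro a b hab
  have hmono : Monotone (fun x => g x - l * x) := by
    apply monotone_of_deriv_nonneg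
    · exact hg.sub (differentiable_fun_id.const_mul l)
    · intro x
      rw [deriv_fun_sub (hg x) ((differentiable_fun_id.const_mul l) x)]
      have : deriv (fun x : ℝ => l * x) x = l := by
        simpa using ((hasDerivAt_id x).const_mul l).deriv
      rw [this]
      linarith [hd x]
  have h2 : g a - l * a ≤ g b - l * b := hmono hab
  linarith

lemma g_anti {g : ℝ → ℝ} {l : ℝ} (hl : 0 < l) (hg : Differentiable ℝ g)
    (hd : ∀ x, l ≤ deriv g x) :
    AntilipschitzWith (l.toNNReal)⁻¹ g := by
  rw [antilipschitzWith_iff_le_mul_dist]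
  intro x y
  have hc : ((l.toNNReal⁻¹ : ℝ≥0) : ℝ) = l⁻¹ := by
    rw [NNReal.coe_inv, Real.coe_toNNReal _ hl.le]
  rw [hc]
  wlog h : x ≤ y generalizing x y
  · rw [dist_comm, dist_comm (g x)]; exact this y x (le_of_not_ge h)
  have hk := g_key hl hg hd x y h
  have h2 : g x ≤ g y := by nlinarith
  rw [Real.dist_eq, Real.dist_eq, abs_of_nonpos (by linarith), abs_of_nonpos (by linarith)]
  rw [le_inv_mul_iff₀ hl]
  linarith

lemma g_surj {g : ℝ → ℝ} {l : ℝ} (hl : 0 < l) (hg : Differentiable ℝ g)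
    (hd : ∀ x, l ≤ deriv g x) : Function.Surjective g := by
  apply Continuous.surjective hg.continuous
  · apply Filter.tendsto_atTop_mono' Filter.atTop
      (f₁ := fun x : ℝ => g 0 + l * x)
    · filter_upwards [Filter.eventually_ge_atTop (0:ℝ)] with x hx
      have := g_key hl hg hd 0 x hx
      linarith
    · exact Filter.tendsto_atTop_add_const_left _ _
        (Filter.Tendsto.const_mul_atTop hl Filter.tendsto_id)
  · apply Filter.tendsto_atBot_mono' Filter.atBot
      (f₁ := fun x : ℝ => g 0 + l * x)
    · filter_upwards [Filter.eventually_le_atBot (0:ℝ)] with x hx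
      have := g_key hl hg hd x 0 hx
      linarith
    · apply Filter.tendsto_atBot_add_const_left
      exact Filter.Tendsto.const_mul_atBot hl (Filter.tendsto_id (x := (Filter.atBot : Filter ℝ)))

lemma g_lip {g : ℝ → ℝ} {l u : ℝ} (hl : 0 < l) (hg : Differentiable ℝ g)
    (hd : ∀ x, l ≤ deriv g x ∧ deriv g x ≤ u) :
    LipschitzWith u.toNNReal g := by
  apply lipschitzWith_of_nnnorm_deriv_le hg
  intro x
  have hu : 0 < u := lt_of_lt_of_le hl (le_trans (hd x).1 (hd x).2)
  rw [← NNReal.coe_le_coe, coe_nnnorm, Real.norm_eq_abs, Real.coe_toNNReal _ hu.le]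
  exact abs_le.mpr ⟨by linarith [(hd x).1], (hd x).2⟩

noncomputable def piMapE (p : ℕ) (g : ℝ → ℝ) :
    EuclideanSpace ℝ (Fin p) → EuclideanSpace ℝ (Fin p) := fun x => WithLp.toLp 2 (fun j => g (x j))

lemma pi_lip {p : ℕ} {C : ℝ≥0} {g : ℝ → ℝ} (hg : LipschitzWith C g) :
    LipschitzWith C (piMapE p g) := by
  apply LipschitzWith.of_dist_le_mul
  intro x y
  rw [EuclideanSpace.dist_eq, EuclideanSpace.dist_eq]
  simp only [piMapE, PiLp.toLp_apply]
  have h1 : ∀ i : Fin p, dist (g (x i)) (g (y i)) ^ 2 ≤ (C : ℝ) ^ 2 * dist (x i) (y i) ^ 2 := by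
    intro i
    have h := hg.dist_le_mul (x i) (y i)
    have h0 : (0:ℝ) ≤ dist (g (x i)) (g (y i)) := dist_nonneg
    nlinarith
  calc Real.sqrt (∑ i, dist (g (x i)) (g (y i)) ^ 2)
      ≤ Real.sqrt (∑ i, (C:ℝ) ^ 2 * dist (x i) (y i) ^ 2) :=
        Real.sqrt_le_sqrt (Finset.sum_le_sum fun i _ => h1 i)
    _ = C * Real.sqrt (∑ i, dist (x i) (y i) ^ 2) := by
        rw [← Finset.mul_sum, Real.sqrt_mul (by positivity), Real.sqrt_sq C.coe_nonneg]

lemma pi_anti {p : ℕ} {C : ℝ≥0} {g : ℝ → ℝ} (hg : AntilipschitzWith C g) :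
    AntilipschitzWith C (piMapE p g) := by
  rw [antilipschitzWith_iff_le_mul_dist]
  intro x y
  rw [EuclideanSpace.dist_eq, EuclideanSpace.dist_eq]
  simp only [piMapE, PiLp.toLp_apply]
  have h1 : ∀ i : Fin p, dist (x i) (y i) ^ 2 ≤ (C : ℝ) ^ 2 * dist (g (x i)) (g (y i)) ^ 2 := by
    intro i
    have h := hg.le_mul_dist (x i) (y i)
    have h0 : (0:ℝ) ≤ dist (x i) (y i) := dist_nonneg
    nlinarith
  calc Real.sqrt (∑ i, dist (x i) (y i) ^ 2)
      ≤ Real.sqrt (∑ i, (C:ℝ) ^ 2 * dist (g (x i)) (g (y i)) ^ 2) :=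
        Real.sqrt_le_sqrt (Finset.sum_le_sum fun i _ => h1 i)
    _ = C * Real.sqrt (∑ i, dist (g (x i)) (g (y i)) ^ 2) := by
        rw [← Finset.mul_sum, Real.sqrt_mul (by positivity), Real.sqrt_sq C.coe_nonneg]

lemma pi_bij {p : ℕ} {g : ℝ → ℝ} (hg : Function.Bijective g) :
    Function.Bijective (piMapE p g) := by
  constructor
  · intro x y hxy
    ext j
    exact hg.1 (congrArg (fun v => v j) hxy)
  · intro y
    refine ⟨piMapE p (Function.invFun g) y, ?_⟩
    ext j
    exact Function.rightInverse_invFun hg.2 (y j)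

lemma mulVec_bij {p : ℕ} {M : Matrix (Fin p) (Fin p) ℝ} (hM : IsUnit M) :
    Function.Bijective
      ⇑(LinearMap.toContinuousLinearMap (Matrix.toEuclideanLin (𝕜 := ℝ) M)) := by
  have hdet : IsUnit M.det := (Matrix.isUnit_iff_isUnit_det M).mp hM
  constructor
  · intro x y hxy
    have h1 : M⁻¹.mulVec (M.mulVec x) = M⁻¹.mulVec (M.mulVec y) := by
      have : M.mulVec x = M.mulVec y := congrArg WithLp.ofLp hxy
      rw [this]
    rw [Matrix.mulVec_mulVec, Matrix.mulVec_mulVec, Matrix.nonsing_inv_mul M hdet,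
      Matrix.one_mulVec, Matrix.one_mulVec] at h1
    exact WithLp.ofLp_injective 2 h1
  · intro y
    refine ⟨WithLp.toLp 2 (M⁻¹.mulVec y), ?_⟩
    apply WithLp.ofLp_injective 2
    show M.mulVec (M⁻¹.mulVec y) = y
    rw [Matrix.mulVec_mulVec, Matrix.mul_nonsing_inv M hdet, Matrix.one_mulVec]

lemma mulVec_anti {p : ℕ} {M : Matrix (Fin p) (Fin p) ℝ} (hM : IsUnit M) :
    AntilipschitzWith (specNorm M⁻¹).toNNReal
      ⇑(LinearMap.toContinuousLinearMap (Matrix.toEuclideanLin (𝕜 := ℝ) M)) := by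
  have hdet : IsUnit M.det := (Matrix.isUnit_iff_isUnit_det M).mp hM
  rw [antilipschitzWith_iff_le_mul_dist]
  intro x y
  set T := LinearMap.toContinuousLinearMap (Matrix.toEuclideanLin (𝕜 := ℝ) M)
  set N := LinearMap.toContinuousLinearMap (Matrix.toEuclideanLin (𝕜 := ℝ) M⁻¹)
  have hinv : ∀ z : EuclideanSpace ℝ (Fin p), N (T z) = z := by
    intro z
    apply WithLp.ofLp_injective 2
    show M⁻¹.mulVec (M.mulVec z) = z
    rw [Matrix.mulVec_mulVec, Matrix.nonsing_inv_mul M hdet, Matrix.one_mulVec]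
  calc dist x y = dist (N (T x)) (N (T y)) := by rw [hinv, hinv]
    _ ≤ (specNorm M⁻¹).toNNReal * dist (T x) (T y) := (mulVec_lipschitz M⁻¹).dist_le_mul _ _

lemma layerMap_eq {p : ℕ} (W : Matrix (Fin p) (Fin p) ℝ) (g : ℝ → ℝ) :
    layerMap W g = (piMapE p g) ∘
      ⇑(LinearMap.toContinuousLinearMap (Matrix.toEuclideanLin (𝕜 := ℝ) Wᵀ)) := rfl

lemma layer_lip {p : ℕ} {W : Matrix (Fin p) (Fin p) ℝ} {g : ℝ → ℝ} {u : ℝ}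
    (hg : LipschitzWith u.toNNReal g) :
    LipschitzWith (u.toNNReal * (specNorm W).toNNReal) (layerMap W g) := by
  rw [layerMap_eq, ← specNorm_transpose W]
  exact (pi_lip hg).comp (mulVec_lipschitz Wᵀ)

lemma layer_anti {p : ℕ} {W : Matrix (Fin p) (Fin p) ℝ} {g : ℝ → ℝ} {l : ℝ}
    (hW : IsUnit W) (hg : AntilipschitzWith l.toNNReal⁻¹ g) :
    AntilipschitzWith ((specNorm W⁻¹).toNNReal * l.toNNReal⁻¹) (layerMap W g) := by
  rw [layerMap_eq]
  have hWT : IsUnit Wᵀ := by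
    rw [Matrix.isUnit_iff_isUnit_det, Matrix.det_transpose]
    exact (Matrix.isUnit_iff_isUnit_det W).mp hW
  have h1 : specNorm (Wᵀ)⁻¹ = specNorm W⁻¹ := by
    rw [← Matrix.transpose_nonsing_inv, specNorm_transpose]
  have := (pi_anti hg).comp (mulVec_anti hWT)
  rwa [h1] at this

lemma layer_bij {p : ℕ} {W : Matrix (Fin p) (Fin p) ℝ} {g : ℝ → ℝ}
    (hW : IsUnit W) (hg : Function.Bijective g) :
    Function.Bijective (layerMap W g) := by
  rw [layerMap_eq]
  have hWT : IsUnit Wᵀ := by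
    rw [Matrix.isUnit_iff_isUnit_det, Matrix.det_transpose]
    exact (Matrix.isUnit_iff_isUnit_det W).mp hW
  exact (pi_bij hg).comp (mulVec_bij hWT)

lemma foldl_lip {p n : ℕ} (F : Fin n → EuclideanSpace ℝ (Fin p) → EuclideanSpace ℝ (Fin p))
    (K : Fin n → ℝ≥0) (hF : ∀ i, LipschitzWith (K i) (F i)) :
    LipschitzWith (∏ i, K i) (fun x => Fin.foldl n (fun y i => F i y) x) := by
  induction n with
  | zero =>
    simp only [Fin.foldl_zero, Finset.univ_eq_empty, Finset.prod_empty]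
    exact LipschitzWith.id
  | succ n ih =>
    have he : (fun x => Fin.foldl (n+1) (fun y i => F i y) x)
        = (fun x => Fin.foldl n (fun y i => F i.succ y) x) ∘ (F 0) := by
      funext x
      simp [Fin.foldl_succ, Function.comp]
    rw [he, Fin.prod_univ_succ, mul_comm]
    exact (ih _ _ fun i => hF i.succ).comp (hF 0)

lemma foldl_anti {p n : ℕ} (F : Fin n → EuclideanSpace ℝ (Fin p) → EuclideanSpace ℝ (Fin p))
    (K : Fin n → ℝ≥0) (hF : ∀ i, AntilipschitzWith (K i) (F i)) :
    AntilipschitzWith (∏ i, K i) (fun x => Fin.foldl n (fun y i => F i y) x) := by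
  induction n with
  | zero =>
    simp only [Fin.foldl_zero, Finset.univ_eq_empty, Finset.prod_empty]
    exact AntilipschitzWith.id
  | succ n ih =>
    have he : (fun x => Fin.foldl (n+1) (fun y i => F i y) x)
        = (fun x => Fin.foldl n (fun y i => F i.succ y) x) ∘ (F 0) := by
      funext x
      simp [Fin.foldl_succ, Function.comp]
    rw [he, Fin.prod_univ_succ]
    exact (ih _ _ fun i => hF i.succ).comp (hF 0)

lemma foldl_bij {p n : ℕ} (F : Fin n → EuclideanSpace ℝ (Fin p) → EuclideanSpace ℝ (Fin p))
    (hF : ∀ i, Function.Bijective (F i)) :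
    Function.Bijective (fun x => Fin.foldl n (fun y i => F i y) x) := by
  induction n with
  | zero =>
    simp only [Fin.foldl_zero]
    exact Function.bijective_id
  | succ n ih =>
    have he : (fun x => Fin.foldl (n+1) (fun y i => F i y) x)
        = (fun x => Fin.foldl n (fun y i => F i.succ y) x) ∘ (F 0) := by
      funext x
      simp [Fin.foldl_succ, Function.comp]
    rw [he]
    exact (ih _ fun i => hF i.succ).comp (hF 0)

theorem stmt0 (p L : ℕ) (hp : 1 ≤ p) (hL : 2 ≤ L)
    (W : Fin (L - 1) → Matrix (Fin p) (Fin p) ℝ) (g : Fin (L - 1) → ℝ → ℝ)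
    (l u κ : ℝ) (hl : 0 < l) (hlu : l ≤ u)
    (hWinv : ∀ i, IsUnit (W i))
    (hcond : ∀ i, specNorm (W i) * specNorm (W i)⁻¹ ≤ κ)
    (hgdiff : ∀ i, Differentiable ℝ (g i))
    (hgderiv : ∀ i x, l ≤ deriv (g i) x ∧ deriv (g i) x ≤ u) :
    Function.Bijective (netF W g) ∧
      ∃ K M : ℝ, 0 < K ∧ 0 < M ∧
        LipschitzWith K.toNNReal (netF W g) ∧
        LipschitzWith M.toNNReal (Function.invFun (netF W g)) ∧
        K * M ≤ (κ * u / l) ^ (L - 1) := by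
  have hu : 0 < u := lt_of_lt_of_le hl hlu
  have hgbij : ∀ i, Function.Bijective (g i) := fun i =>
    ⟨(g_anti hl (hgdiff i) (fun x => (hgderiv i x).1)).injective,
     g_surj hl (hgdiff i) (fun x => (hgderiv i x).1)⟩
  have hWinv' : ∀ i, IsUnit ((W i)⁻¹) := by
    intro i
    have hdet := (Matrix.isUnit_iff_isUnit_det (W i)).mp (hWinv i)
    exact ⟨⟨(W i)⁻¹, W i, Matrix.nonsing_inv_mul _ hdet, Matrix.mul_nonsing_inv _ hdet⟩, rfl⟩
  have hbij : Function.Bijective (netF W g) :=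
    foldl_bij _ (fun i => layer_bij (hWinv i) (hgbij i))
  refine ⟨hbij, ?_⟩
  set KK : Fin (L-1) → ℝ≥0 := fun i => u.toNNReal * (specNorm (W i)).toNNReal with hKK
  set MM : Fin (L-1) → ℝ≥0 := fun i => (specNorm ((W i)⁻¹)).toNNReal * l.toNNReal⁻¹ with hMM
  have hlipF : LipschitzWith (∏ i, KK i) (netF W g) :=
    foldl_lip _ _ (fun i => layer_lip (g_lip hl (hgdiff i) (hgderiv i)))
  have hantiF : AntilipschitzWith (∏ i, MM i) (netF W g) :=
    foldl_anti _ _ (fun i => layer_anti (hWinv i) (g_anti hl (hgdiff i) fun x => (hgderiv i x).1))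
  have hKne : ∀ i, KK i ≠ 0 := by
    intro i
    apply mul_ne_zero
    · exact (Real.toNNReal_pos.mpr hu).ne'
    · exact (Real.toNNReal_pos.mpr (specNorm_pos hp (hWinv i))).ne'
  have hMne : ∀ i, MM i ≠ 0 := by
    intro i
    apply mul_ne_zero
    · exact (Real.toNNReal_pos.mpr (specNorm_pos hp (hWinv' i))).ne'
    · rw [Ne, inv_eq_zero]
      exact (Real.toNNReal_pos.mpr hl).ne'
  refine ⟨((∏ i, KK i : ℝ≥0) : ℝ), ((∏ i, MM i : ℝ≥0) : ℝ), ?_, ?_, ?_, ?_, ?_⟩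
  · exact NNReal.coe_pos.mpr (pos_iff_ne_zero.mpr (Finset.prod_ne_zero_iff.mpr fun i _ => hKne i))
  · exact NNReal.coe_pos.mpr (pos_iff_ne_zero.mpr (Finset.prod_ne_zero_iff.mpr fun i _ => hMne i))
  · rw [Real.toNNReal_coe]; exact hlipF
  · rw [Real.toNNReal_coe]
    exact hantiF.to_rightInverse (Function.rightInverse_invFun hbij.2)
  · rw [← NNReal.coe_mul, ← Finset.prod_mul_distrib, NNReal.coe_prod]
    have hbound : ∀ i ∈ (Finset.univ : Finset (Fin (L-1))),
        ((KK i * MM i : ℝ≥0) : ℝ) ≤ κ * u / l := by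
      intro i _
      have ha : 0 ≤ specNorm (W i) := specNorm_nonneg _
      have hb : 0 ≤ specNorm ((W i)⁻¹) := specNorm_nonneg _
      have hcoe : ((KK i * MM i : ℝ≥0) : ℝ)
          = (u * specNorm (W i)) * (specNorm ((W i)⁻¹) * l⁻¹) := by
        push_cast [hKK, hMM]
        rw [Real.coe_toNNReal _ hu.le, Real.coe_toNNReal _ ha,
          Real.coe_toNNReal _ hb, Real.coe_toNNReal _ hl.le]
      rw [hcoe]
      have h1 : specNorm (W i) * specNorm ((W i)⁻¹) * (u * l⁻¹) ≤ κ * (u * l⁻¹) :=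
        mul_le_mul_of_nonneg_right (hcond i) (by positivity)
      have heq : (u * specNorm (W i)) * (specNorm ((W i)⁻¹) * l⁻¹)
          = specNorm (W i) * specNorm ((W i)⁻¹) * (u * l⁻¹) := by ring
      have heq2 : κ * u / l = κ * (u * l⁻¹) := by ring
      rw [heq, heq2]
      exact h1
    calc ∏ i, ((KK i * MM i : ℝ≥0) : ℝ)
        ≤ ∏ _i : Fin (L-1), (κ * u / l) :=
          Finset.prod_le_prod (fun i _ => NNReal.coe_nonneg _) hbound
      _ = (κ * u / l) ^ (L - 1) := by
          rw [Finset.prod_const, Finset.card_univ, Fintype.card_fin]
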